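/- Let G be a finite simple connected graph on vertex set {x_1,…,x_n} and let 𝒜 = {e_i + e_j : {x_i,x_j} is an edge of G} ⊂ ℝ^n. A vector a = (a_1,…,a_n) ∈ ℝ^n is a nonnegative real linear combination of vectors in 𝒜 if and only if a_i ≥ 0 for i = 1,…,n and, for every independent set of vertices A of G, ∑_{x_i ∈ N_G(A)} a_i − ∑_{x_i ∈ A} a_i ≥ 0. -/

import Mathlib

open Finset RealInnerProductSpace

section EdgeConeHelpers


theorem cone_caratheodory {ι : Type*} [Fintype ι] [DecidableEq ι] {E : Type*}
    [AddCommGroup E] [Module ℝ E] (v : ι → E) :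
    ∀ (N : ℕ) (T : Finset ι), T.card ≤ N → ∀ c : ι → ℝ, (∀ i, 0 ≤ c i) →
      ∃ T' : Finset ι, LinearIndependent ℝ (fun i : T' => v i) ∧
        ∃ c' : ι → ℝ, (∀ i, 0 ≤ c' i) ∧ ∑ i ∈ T', c' i • v i = ∑ i ∈ T, c i • v i := by
  classical
  intro N
  induction N with
  | zero =>
    intro T hT c hc
    have : T = ∅ := Finset.card_eq_zero.mp (Nat.le_zero.mp hT)
    subst this
    exact ⟨∅, linearIndependent_empty_type, c, hc, rfl⟩
  | succ N ih =>
    intro T hT c hc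
    by_cases hind : LinearIndependent ℝ (fun i : T => v i)
    · exact ⟨T, hind, c, hc, rfl⟩
    · -- get a nontrivial relation
      obtain ⟨g, hg, i₀, hi₀⟩ := Fintype.not_linearIndependent_iff.mp hind
      -- wlog some positive coefficient
      have key : ∀ g : T → ℝ, (∑ i : T, g i • v i = 0) → ∀ i₀ : T, 0 < g i₀ →
          ∃ T' : Finset ι, LinearIndependent ℝ (fun i : T' => v i) ∧
            ∃ c' : ι → ℝ, (∀ i, 0 ≤ c' i) ∧ ∑ i ∈ T', c' i • v i = ∑ i ∈ T, c i • v i := by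
        intro g hg i₀ hi₀
        -- the set of positive-coefficient indices
        set P : Finset T := univ.filter (fun i => 0 < g i) with hP
        have hPne : P.Nonempty := ⟨i₀, by simp [hP, hi₀]⟩
        obtain ⟨i₁, hi₁P, hi₁min⟩ := P.exists_min_image (fun i => c i / g i) hPne
        have hgi₁ : 0 < g i₁ := by simpa [hP] using hi₁P
        set r : ℝ := c i₁ / g i₁ with hr
        have hr0 : 0 ≤ r := div_nonneg (hc i₁) hgi₁.le
        -- new coefficients
        set c' : ι → ℝ := fun j => if h : j ∈ T then c j - r * g ⟨j, h⟩ else 0 with hc'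
        have hc'0 : ∀ j, 0 ≤ c' j := by
          intro j
          rw [hc']; dsimp only
          split
          case isTrue h =>
            rcases le_or_gt (g ⟨j, h⟩) 0 with hgle | hgpos
            · have : r * g ⟨j, h⟩ ≤ 0 := mul_nonpos_of_nonneg_of_nonpos hr0 hgle
              linarith [hc j]
            · have hmem : (⟨j, h⟩ : T) ∈ P := by simp [hP, hgpos]
              have := hi₁min _ hmem
              rw [hr] at *
              have : c i₁ / g i₁ * g ⟨j, h⟩ ≤ c j / g ⟨j, h⟩ * g ⟨j, h⟩ := by
                apply mul_le_mul_of_nonneg_right this hgpos.le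
              rw [div_mul_cancel₀ _ (ne_of_gt hgpos)] at this
              linarith
          case isFalse => exact le_rfl
        have hc'i₁ : c' (↑i₁) = 0 := by
          rw [hc']; dsimp only
          rw [dif_pos i₁.2]
          simp only [Subtype.coe_eta]
          rw [hr]; field_simp; ring
        have hsum : ∑ j ∈ T, c' j • v j = ∑ j ∈ T, c j • v j := by
          have h1 : ∑ j ∈ T, c' j • v j = ∑ j : T, c' ↑j • v ↑j :=
            (Finset.sum_coe_sort T (fun j => c' j • v j)).symm
          have h2 : ∑ j ∈ T, c j • v j = ∑ j : T, c ↑j • v ↑j :=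
            (Finset.sum_coe_sort T (fun j => c j • v j)).symm
          rw [h1, h2]
          have : ∀ j : T, c' ↑j • v ↑j = c ↑j • v ↑j - (r * g j) • v ↑j := by
            intro j
            rw [hc']; dsimp only
            rw [dif_pos j.2]
            simp only [Subtype.coe_eta]
            rw [sub_smul]
          rw [Finset.sum_congr rfl (fun j _ => this j)]
          rw [Finset.sum_sub_distrib]
          have : ∑ j : T, (r * g j) • v ↑j = r • ∑ j : T, g j • v ↑j := by
            rw [Finset.smul_sum]
            exact Finset.sum_congr rfl (fun j _ => by rw [smul_smul])
          rw [this, hg, smul_zero, sub_zero]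
        have hsum2 : ∑ j ∈ T.erase i₁, c' j • v j = ∑ j ∈ T, c' j • v j := by
          apply Finset.sum_subset (Finset.erase_subset _ _)
          intro x hxT hx
          have : x = ↑i₁ := by
            by_contra hne
            exact hx (Finset.mem_erase.mpr ⟨hne, hxT⟩)
          subst this
          rw [hc'i₁, zero_smul]
        have hcard : (T.erase ↑i₁).card ≤ N := by
          have := Finset.card_erase_of_mem i₁.2
          omega
        obtain ⟨T', hT', c'', hc''0, hc''⟩ := ih (T.erase ↑i₁) hcard c' hc'0
        exact ⟨T', hT', c'', hc''0, by rw [hc'', hsum2, hsum]⟩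
      rcases hi₀.lt_or_gt with hneg | hpos
      · have hg' : ∑ i : T, (-g) i • v i = 0 := by
          simp only [Pi.neg_apply, neg_smul, Finset.sum_neg_distrib, hg, neg_zero]
        exact key (-g) hg' i₀ (by simpa using hneg)
      · exact key g hg i₀ hpos


-- cone over a linearly independent finite family is closed
theorem isClosed_cone_li {ι : Type*} [Fintype ι] [DecidableEq ι] {E : Type*}
    [NormedAddCommGroup E] [NormedSpace ℝ E]
    (v : ι → E) (T : Finset ι) (hT : LinearIndependent ℝ (fun i : T => v i)) :
    IsClosed {x : E | ∃ c : ι → ℝ, (∀ i, 0 ≤ c i) ∧ x = ∑ i ∈ T, c i • v i} := by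
  classical
  let L : (T → ℝ) →ₗ[ℝ] E :=
    { toFun := fun c => ∑ i : T, c i • v i
      map_add' := by intro c d; simp [add_smul, Finset.sum_add_distrib]
      map_smul' := by intro r c; simp [smul_smul, Finset.smul_sum]
      }
  have hker : LinearMap.ker L = ⊥ := by
    rw [LinearMap.ker_eq_bot']
    intro g hg
    have := Fintype.linearIndependent_iff.mp hT g hg
    funext i; exact this i
  have hLe : Topology.IsClosedEmbedding L := LinearMap.isClosedEmbedding_of_injective hker
  have hcl : IsClosed {c : T → ℝ | ∀ i, 0 ≤ c i} := by
    have : {c : T → ℝ | ∀ i, 0 ≤ c i} = ⋂ i, {c | 0 ≤ c i} := by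
      ext c; simp [Set.mem_iInter]
    rw [this]
    exact isClosed_iInter fun i => isClosed_le continuous_const (continuous_apply i)
  have himg := hLe.isClosedMap _ hcl
  convert himg using 1
  ext x
  constructor
  · rintro ⟨c, hc0, rfl⟩
    refine ⟨fun i => c i, fun i => hc0 i, ?_⟩
    show ∑ i : T, c i • v i = _
    rw [Finset.sum_coe_sort T (fun i => c i • v i)]
  · rintro ⟨c, hc0, rfl⟩
    refine ⟨fun j => if h : j ∈ T then c ⟨j, h⟩ else 0, ?_, ?_⟩
    · intro j; dsimp only; split
      · exact hc0 _
      · exact le_refl _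
    · show _ = ∑ j ∈ T, (if h : j ∈ T then c ⟨j, h⟩ else 0) • v j
      rw [← Finset.sum_coe_sort T (fun j => (if h : j ∈ T then c ⟨j,h⟩ else 0) • v j)]
      apply Finset.sum_congr rfl
      intro i _
      rw [dif_pos i.2]

theorem isClosed_cone_fg {ι : Type*} [Fintype ι] [DecidableEq ι] {E : Type*}
    [NormedAddCommGroup E] [NormedSpace ℝ E]
    (v : ι → E) :
    IsClosed {x : E | ∃ c : ι → ℝ, (∀ i, 0 ≤ c i) ∧ x = ∑ i, c i • v i} := by
  classical
  have hrw : {x : E | ∃ c : ι → ℝ, (∀ i, 0 ≤ c i) ∧ x = ∑ i, c i • v i}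
      = ⋃ T : Finset ι, {x : E | LinearIndependent ℝ (fun i : T => v i) ∧
          ∃ c : ι → ℝ, (∀ i, 0 ≤ c i) ∧ x = ∑ i ∈ T, c i • v i} := by
    ext x
    simp only [Set.mem_iUnion, Set.mem_setOf_eq]
    constructor
    · rintro ⟨c, hc, rfl⟩
      obtain ⟨T', hT', c', hc', hsum⟩ :=
        cone_caratheodory v (univ : Finset ι).card univ le_rfl c hc
      exact ⟨T', hT', c', hc', hsum.symm⟩
    · rintro ⟨T, hT, c, hc, rfl⟩
      refine ⟨fun j => if j ∈ T then c j else 0,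
        fun j => by dsimp only; split; exacts [hc j, le_rfl], ?_⟩
      have h1 : ∑ i ∈ T, c i • v i = ∑ i ∈ T, (if i ∈ T then c i else 0) • v i :=
        Finset.sum_congr rfl fun i hi => by rw [if_pos hi]
      rw [h1]
      exact Finset.sum_subset (Finset.subset_univ T)
        (fun x _ hx => by simp only [if_neg hx, zero_smul])
  rw [hrw]
  apply isClosed_iUnion_of_finite
  intro T
  by_cases h : LinearIndependent ℝ (fun i : T => v i)
  · have : {x : E | LinearIndependent ℝ (fun i : T => v i) ∧
        ∃ c : ι → ℝ, (∀ i, 0 ≤ c i) ∧ x = ∑ i ∈ T, c i • v i}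
        = {x : E | ∃ c : ι → ℝ, (∀ i, 0 ≤ c i) ∧ x = ∑ i ∈ T, c i • v i} := by
      ext x; simp [h]
    rw [this]
    exact isClosed_cone_li v T h
  · have : {x : E | LinearIndependent ℝ (fun i : T => v i) ∧
        ∃ c : ι → ℝ, (∀ i, 0 ≤ c i) ∧ x = ∑ i ∈ T, c i • v i} = ∅ := by
      ext x; simp [h]
    rw [this]
    exact isClosed_empty


theorem dual_edge {n : ℕ} (G : SimpleGraph (Fin n)) [DecidableRel G.Adj] (a : Fin n → ℝ)
    (ha : ∀ i, 0 ≤ a i)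
    (hA : ∀ A : Finset (Fin n), (∀ u ∈ A, ∀ w ∈ A, ¬ G.Adj u w) →
      0 ≤ (∑ i ∈ Finset.univ.filter (fun v => ∃ u ∈ A, G.Adj u v), a i) - ∑ i ∈ A, a i)
    (y : Fin n → ℝ) (hy : ∀ i j, G.Adj i j → 0 ≤ y i + y j) :
    0 ≤ ∑ i, y i * a i := by
  classical
  suffices H : ∀ (k : ℕ) (y : Fin n → ℝ),
      ((univ.filter fun i => y i < 0).image y).card ≤ k →
      (∀ i j, G.Adj i j → 0 ≤ y i + y j) → 0 ≤ ∑ i, y i * a i from H _ y le_rfl hy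
  intro k
  induction k with
  | zero =>
    intro y hcard _
    have hempty : (univ.filter fun i => y i < 0) = ∅ := by
      by_contra h
      obtain ⟨i, hi⟩ := Finset.nonempty_of_ne_empty h
      have : y i ∈ (univ.filter fun i => y i < 0).image y := Finset.mem_image_of_mem y hi
      have := Finset.card_pos.mpr ⟨_, this⟩
      omega
    apply Finset.sum_nonneg
    intro i _
    have hyi : 0 ≤ y i := by
      by_contra h
      have : i ∈ univ.filter fun i => y i < 0 := by
        simp [lt_of_not_ge h]
      rw [hempty] at this; exact absurd this (Finset.notMem_empty i)
    exact mul_nonneg hyi (ha i)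
  | succ k ih =>
    intro y hcard hy
    set Neg : Finset (Fin n) := univ.filter fun i => y i < 0 with hNeg
    by_cases hne : Neg.Nonempty
    case neg =>
      apply Finset.sum_nonneg
      intro i _
      have hyi : 0 ≤ y i := by
        by_contra h
        exact hne ⟨i, by simp [hNeg, lt_of_not_ge h]⟩
      exact mul_nonneg hyi (ha i)
    case pos =>
    have hneim : (Neg.image y).Nonempty := hne.image y
    set m : ℝ := (Neg.image y).min' hneim with hm
    obtain ⟨i₀, hi₀Neg, hi₀⟩ := Finset.mem_image.mp ((Neg.image y).min'_mem hneim)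
    have hmneg : m < 0 := by
      have h0 : y i₀ < 0 := by simpa [hNeg] using hi₀Neg
      rw [hm, ← hi₀]; exact h0
    have hmle : ∀ i, y i < 0 → m ≤ y i := by
      intro i hi
      exact Finset.min'_le _ _ (Finset.mem_image_of_mem y (by simp [hNeg, hi]))
    have hmle' : ∀ i, m ≤ y i := fun i => by
      rcases lt_or_ge (y i) 0 with h | h
      · exact hmle i h
      · linarith
    set A : Finset (Fin n) := univ.filter fun i => y i = m with hA'
    have hAy : ∀ i ∈ A, y i = m := fun i hi => by simpa [hA'] using hi
    have hAind : ∀ u ∈ A, ∀ w ∈ A, ¬ G.Adj u w := by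
      intro u hu w hw hadj
      have := hy u w hadj
      rw [hAy u hu, hAy w hw] at this
      linarith
    set NA : Finset (Fin n) := univ.filter (fun v => ∃ u ∈ A, G.Adj u v) with hNA'
    have hNAy : ∀ v ∈ NA, -m ≤ y v := by
      intro v hv
      obtain ⟨u, hu, hadj⟩ : ∃ u ∈ A, G.Adj u v := by simpa [hNA'] using hv
      have := hy u v hadj
      rw [hAy u hu] at this
      linarith
    have hANA : ∀ v ∈ A, v ∉ NA := by
      intro v hv hvNA
      have h1 := hNAy v hvNA
      rw [hAy v hv] at h1
      linarith
    set Out : Finset (Fin n) := Neg.filter (fun i => i ∉ A) with hOut'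
    set m' : ℝ := if h : Out.Nonempty then (Out.image y).min' (h.image y) else 0 with hm'
    have hm'le0 : m' ≤ 0 := by
      rw [hm']
      split
      case isTrue h =>
        obtain ⟨j, hj, hjy⟩ := Finset.mem_image.mp ((Out.image y).min'_mem (h.image y))
        have : y j < 0 := by
          have := Finset.mem_filter.mp hj
          simpa [hNeg] using this.1
        linarith [hjy ▸ this]
      case isFalse => exact le_rfl
    have hmm' : m < m' := by
      rw [hm']
      split
      case isTrue h =>
        obtain ⟨j, hj, hjy⟩ := Finset.mem_image.mp ((Out.image y).min'_mem (h.image y))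
        obtain ⟨hjNeg, hjA⟩ := Finset.mem_filter.mp hj
        have h1 : m ≤ y j := hmle' j
        have h2 : y j ≠ m := by
          intro hh; exact hjA (by simp [hA', hh])
        rw [hjy] at h1 h2
        exact lt_of_le_of_ne h1 (Ne.symm h2)
      case isFalse => linarith
    have hm'le : ∀ j, j ∉ A → m' ≤ y j := by
      intro j hjA
      rcases lt_or_ge (y j) 0 with hneg | hpos
      · have hjOut : j ∈ Out := Finset.mem_filter.mpr ⟨by simp [hNeg, hneg], hjA⟩
        have hOutne : Out.Nonempty := ⟨j, hjOut⟩
        rw [hm', dif_pos hOutne]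
        exact Finset.min'_le _ _ (Finset.mem_image_of_mem y hjOut)
      · linarith
    set ε : ℝ := m' - m with hε
    have hε0 : 0 ≤ ε := by rw [hε]; linarith
    set y' : Fin n → ℝ := fun i => if i ∈ A then y i + ε else if i ∈ NA then y i - ε else y i
      with hy'def
    have hy'A : ∀ i ∈ A, y' i = y i + ε := fun i hi => by simp [hy'def, hi]
    have hy'NA : ∀ i ∈ NA, y' i = y i - ε := fun i hi => by
      have hiA : i ∉ A := fun h => hANA i h hi
      simp [hy'def, hi, hiA]
    have hy'O : ∀ i, i ∉ A → i ∉ NA → y' i = y i := fun i h1 h2 => by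
      simp [hy'def, h1, h2]
    -- edge inequalities for y'
    have hy' : ∀ i j, G.Adj i j → 0 ≤ y' i + y' j := by
      intro i j hadj
      by_cases hiA : i ∈ A
      · by_cases hjA : j ∈ A
        · exact absurd hadj (hAind i hiA j hjA)
        · have hjNA : j ∈ NA := by simp [hNA']; exact ⟨i, hiA, hadj⟩
          rw [hy'A i hiA, hy'NA j hjNA]
          have := hy i j hadj
          linarith
      · by_cases hjA : j ∈ A
        · have hiNA : i ∈ NA := by simp [hNA']; exact ⟨j, hjA, hadj.symm⟩
          rw [hy'NA i hiNA, hy'A j hjA]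
          have := hy i j hadj
          linarith
        · by_cases hiNA : i ∈ NA
          · by_cases hjNA : j ∈ NA
            · rw [hy'NA i hiNA, hy'NA j hjNA]
              have h1 := hNAy i hiNA
              have h2 := hNAy j hjNA
              rw [hε]; linarith
            · rw [hy'NA i hiNA, hy'O j hjA hjNA]
              have h1 := hNAy i hiNA
              have h2 := hm'le j hjA
              rw [hε]; linarith
          · by_cases hjNA : j ∈ NA
            · rw [hy'O i hiA hiNA, hy'NA j hjNA]
              have h1 := hNAy j hjNA
              have h2 := hm'le i hiA
              rw [hε]; linarith
            · rw [hy'O i hiA hiNA, hy'O j hjA hjNA]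
              exact hy i j hadj
    -- measure decreases
    have hsub : (univ.filter fun i => y' i < 0).image y' ⊆ (Neg.image y).erase m := by
      intro z hz
      obtain ⟨i, hi, hiz⟩ := Finset.mem_image.mp hz
      have hineg : y' i < 0 := by simpa using hi
      by_cases hiA : i ∈ A
      · rw [hy'A i hiA, hAy i hiA, hε] at hiz
        have hz' : z = m' := by linarith [hiz]
        have hm'neg : m' < 0 := by
          rw [← hz']
          rw [hy'A i hiA, hAy i hiA, hε] at hineg
          linarith
        have hOutne : Out.Nonempty := by
          by_contra h
          rw [hm', dif_neg h] at hm'neg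
          linarith
        rw [hm', dif_pos hOutne] at hz'
        obtain ⟨j, hj, hjy⟩ := Finset.mem_image.mp ((Out.image y).min'_mem (hOutne.image y))
        obtain ⟨hjNeg, hjA⟩ := Finset.mem_filter.mp hj
        refine Finset.mem_erase.mpr ⟨?_, ?_⟩
        · rw [hz']; rw [hm', dif_pos hOutne] at hmm'; linarith
        · rw [hz', ← hjy]; exact Finset.mem_image_of_mem y hjNeg
      · by_cases hiNA : i ∈ NA
        · exfalso
          rw [hy'NA i hiNA] at hineg
          have h1 := hNAy i hiNA
          rw [hε] at hineg
          linarith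
        · rw [hy'O i hiA hiNA] at hiz hineg
          refine Finset.mem_erase.mpr ⟨?_, ?_⟩
          · rw [← hiz]; intro h; exact hiA (by simp [hA', h])
          · rw [← hiz]; exact Finset.mem_image_of_mem y (by simp [hNeg, hineg])
    have hcard' : ((univ.filter fun i => y' i < 0).image y').card ≤ k := by
      have h1 := Finset.card_le_card hsub
      have h2 : m ∈ Neg.image y := (Neg.image y).min'_mem hneim
      have h3 := Finset.card_erase_of_mem h2
      have h4 := Finset.card_pos.mpr ⟨m, h2⟩
      omega
    have hIH := ih y' hcard' hy'
    -- sum identity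
    have hptwise : ∀ i, y i * a i = y' i * a i +
        ε * ((if i ∈ NA then a i else 0) - (if i ∈ A then a i else 0)) := by
      intro i
      by_cases hiA : i ∈ A
      · rw [hy'A i hiA, if_pos hiA, if_neg (hANA i hiA)]
        ring
      · by_cases hiNA : i ∈ NA
        · rw [hy'NA i hiNA, if_pos hiNA, if_neg hiA]
          ring
        · rw [hy'O i hiA hiNA, if_neg hiA, if_neg hiNA]
          ring
    have hsum : ∑ i, y i * a i = (∑ i, y' i * a i) +
        ε * ((∑ i ∈ NA, a i) - ∑ i ∈ A, a i) := by
      have e1 : ∑ i : Fin n, (if i ∈ NA then a i else 0) = ∑ i ∈ NA, a i := by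
        rw [Finset.sum_ite_mem, Finset.univ_inter]
      have e2 : ∑ i : Fin n, (if i ∈ A then a i else 0) = ∑ i ∈ A, a i := by
        rw [Finset.sum_ite_mem, Finset.univ_inter]
      rw [Finset.sum_congr rfl (fun i _ => hptwise i), Finset.sum_add_distrib, ← Finset.mul_sum,
        Finset.sum_sub_distrib, e1, e2]
    rw [hsum]
    have hAineq := hA A hAind
    have : (0:ℝ) ≤ (∑ i ∈ NA, a i) - ∑ i ∈ A, a i := by
      rw [hNA'] at *
      exact hAineq
    nlinarith [mul_nonneg hε0 this]

theorem euclid_inner_eq {n : ℕ} (x y : EuclideanSpace ℝ (Fin n)) :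
    ⟪x, y⟫ = ∑ i, x i * y i := by
  simp [PiLp.inner_apply, RCLike.inner_apply]
  exact Finset.sum_congr rfl fun i _ => mul_comm _ _



theorem edge_forward {n : ℕ} (G : SimpleGraph (Fin n)) [DecidableRel G.Adj] (a : Fin n → ℝ)
    (h : ∃ c : Fin n → Fin n → ℝ,
        (∀ i j : Fin n, 0 ≤ c i j) ∧
        (∀ i j : Fin n, c i j ≠ 0 → G.Adj i j) ∧
        a = ∑ i : Fin n, ∑ j : Fin n,
              c i j • (Pi.single i (1 : ℝ) + Pi.single j (1 : ℝ))) :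
    (∀ i : Fin n, 0 ≤ a i) ∧
      ∀ A : Finset (Fin n), (∀ u ∈ A, ∀ w ∈ A, ¬ G.Adj u w) →
        0 ≤ (∑ i ∈ Finset.univ.filter (fun v => ∃ u ∈ A, G.Adj u v), a i)
            - ∑ i ∈ A, a i := by
  classical
  obtain ⟨c, hc0, hsupp, hsum⟩ := h
  have haval : ∀ i, a i = (∑ q, c i q) + (∑ p, c p i) := by
    intro i
    have h := congrFun hsum i
    rw [h]
    simp [Finset.sum_apply, Pi.single_apply, mul_add, Finset.sum_add_distrib,
      Finset.sum_ite_eq, Finset.sum_ite_eq']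
  constructor
  · intro i
    rw [haval i]
    have h1 : (0:ℝ) ≤ ∑ q, c i q := Finset.sum_nonneg fun q _ => hc0 i q
    have h2 : (0:ℝ) ≤ ∑ p, c p i := Finset.sum_nonneg fun p _ => hc0 p i
    linarith
  · intro A hAind
    set NA : Finset (Fin n) := Finset.univ.filter (fun v => ∃ u ∈ A, G.Adj u v) with hNA
    set χ : Fin n → ℝ := fun v => (if v ∈ NA then (1:ℝ) else 0) - (if v ∈ A then 1 else 0)
      with hχ
    have hgoal : (∑ i ∈ NA, a i) - ∑ i ∈ A, a i = ∑ i, χ i * a i := by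
      have e1 : ∑ i : Fin n, (if i ∈ NA then a i else 0) = ∑ i ∈ NA, a i := by
        rw [Finset.sum_ite_mem, Finset.univ_inter]
      have e2 : ∑ i : Fin n, (if i ∈ A then a i else 0) = ∑ i ∈ A, a i := by
        rw [Finset.sum_ite_mem, Finset.univ_inter]
      rw [← e1, ← e2, ← Finset.sum_sub_distrib]
      apply Finset.sum_congr rfl
      intro i _
      rw [hχ]
      by_cases h1 : i ∈ NA <;> by_cases h2 : i ∈ A <;> simp [h1, h2]
    rw [hgoal]
    have hexp : ∑ i, χ i * a i = ∑ p, ∑ q, c p q * (χ p + χ q) := by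
      calc ∑ i, χ i * a i = ∑ i, (∑ q, χ i * c i q) + ∑ i, (∑ p, χ i * c p i) := by
            rw [← Finset.sum_add_distrib]
            apply Finset.sum_congr rfl
            intro i _
            rw [haval i, mul_add, Finset.mul_sum, Finset.mul_sum]
        _ = ∑ p, ∑ q, c p q * χ p + ∑ p, ∑ q, c p q * χ q := by
            congr 1
            · apply Finset.sum_congr rfl; intro p _
              apply Finset.sum_congr rfl; intro q _; ring
            · rw [Finset.sum_comm]
              apply Finset.sum_congr rfl; intro p _
              apply Finset.sum_congr rfl; intro q _; ring
        _ = ∑ p, ∑ q, c p q * (χ p + χ q) := by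
            rw [← Finset.sum_add_distrib]
            apply Finset.sum_congr rfl; intro p _
            rw [← Finset.sum_add_distrib]
            apply Finset.sum_congr rfl; intro q _; ring
    rw [hexp]
    apply Finset.sum_nonneg; intro p _
    apply Finset.sum_nonneg; intro q _
    by_cases hc : c p q = 0
    · rw [hc]; ring_nf; exact le_rfl
    · have hadj := hsupp p q hc
      have hχsum : 0 ≤ χ p + χ q := by
        have hAnotNA : ∀ v ∈ A, v ∉ NA := by
          intro v hv hvNA
          obtain ⟨u, hu, hadj'⟩ : ∃ u ∈ A, G.Adj u v := by simpa [hNA] using hvNA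
          exact hAind u hu v hv hadj'
        have hval : ∀ v, v ∉ A → 0 ≤ χ v := by
          intro v hv
          rw [hχ]; dsimp only
          rw [if_neg hv]
          split <;> norm_num
        by_cases hp : p ∈ A
        · have hq : q ∉ A := fun hq => hAind p hp q hq hadj
          have hqNA : q ∈ NA := by simp [hNA]; exact ⟨p, hp, hadj⟩
          rw [hχ]; dsimp only
          rw [if_neg (hAnotNA p hp), if_pos hp, if_pos hqNA, if_neg hq]
          norm_num
        · by_cases hq : q ∈ A
          · have hpNA : p ∈ NA := by simp [hNA]; exact ⟨q, hq, hadj.symm⟩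
            rw [hχ]; dsimp only
            rw [if_neg (hAnotNA q hq), if_pos hq, if_pos hpNA, if_neg hp]
            norm_num
          · have := hval p hp
            have := hval q hq
            linarith
      exact mul_nonneg (hc0 p q) hχsum

theorem edge_backward {n : ℕ} (G : SimpleGraph (Fin n)) [DecidableRel G.Adj] (a : Fin n → ℝ)
    (ha : ∀ i : Fin n, 0 ≤ a i)
    (hA : ∀ A : Finset (Fin n), (∀ u ∈ A, ∀ w ∈ A, ¬ G.Adj u w) →
          0 ≤ (∑ i ∈ Finset.univ.filter (fun v => ∃ u ∈ A, G.Adj u v), a i)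
              - ∑ i ∈ A, a i) :
    (∃ c : Fin n → Fin n → ℝ,
        (∀ i j : Fin n, 0 ≤ c i j) ∧
        (∀ i j : Fin n, c i j ≠ 0 → G.Adj i j) ∧
        a = ∑ i : Fin n, ∑ j : Fin n,
              c i j • (Pi.single i (1 : ℝ) + Pi.single j (1 : ℝ))) := by
  classical
  -- the edge cone as a convex cone in Euclidean space
  let P : (Fin n → ℝ) → Prop := fun x => ∃ c : Fin n → Fin n → ℝ,
        (∀ i j : Fin n, 0 ≤ c i j) ∧
        (∀ i j : Fin n, c i j ≠ 0 → G.Adj i j) ∧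
        x = ∑ i : Fin n, ∑ j : Fin n,
              c i j • (Pi.single i (1 : ℝ) + Pi.single j (1 : ℝ))
  have Psmul : ∀ (t : ℝ), 0 < t → ∀ x : Fin n → ℝ, P x → P (t • x) := by
    rintro t ht x ⟨c, hc0, hsupp, rfl⟩
    refine ⟨fun i j => t * c i j, fun i j => mul_nonneg ht.le (hc0 i j), ?_, ?_⟩
    · intro i j hne
      dsimp only at hne
      apply hsupp i j
      intro h0
      rw [h0, mul_zero] at hne
      exact hne rfl
    rw [Finset.smul_sum]
    apply Finset.sum_congr rfl; intro i _
    rw [Finset.smul_sum]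
    apply Finset.sum_congr rfl; intro j _
    rw [smul_smul]
  have Padd : ∀ x y : Fin n → ℝ, P x → P y → P (x + y) := by
    rintro x y ⟨c, hc0, hsupp, rfl⟩ ⟨d, hd0, hdsupp, rfl⟩
    refine ⟨fun i j => c i j + d i j, fun i j => add_nonneg (hc0 i j) (hd0 i j), ?_, ?_⟩
    · intro i j hne
      dsimp only at hne
      by_cases h : c i j = 0
      · apply hdsupp i j
        intro h0
        rw [h, h0, add_zero] at hne
        exact hne rfl
      · exact hsupp i j h
    · rw [← Finset.sum_add_distrib]
      apply Finset.sum_congr rfl; intro i _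
      rw [← Finset.sum_add_distrib]
      apply Finset.sum_congr rfl; intro j _
      rw [add_smul]
  let K : ConvexCone ℝ (EuclideanSpace ℝ (Fin n)) :=
    { carrier := {x | P x}
      smul_mem' := fun {t} ht {x} hx => Psmul t ht x hx
      add_mem' := fun {x} hx {y} hy => Padd x y hx hy }
  have hK0 : (0 : EuclideanSpace ℝ (Fin n)) ∈ K := by
    refine ⟨0, fun i j => le_rfl, fun i j h => absurd rfl h, ?_⟩
    simp
  -- closedness
  have hKset : (K : Set (EuclideanSpace ℝ (Fin n))) =
      {x : EuclideanSpace ℝ (Fin n) | ∃ c : Fin n × Fin n → ℝ, (∀ p, 0 ≤ c p) ∧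
        x = ∑ p : Fin n × Fin n, c p •
          WithLp.toLp 2 (if G.Adj p.1 p.2 then (Pi.single p.1 (1:ℝ) + Pi.single p.2 1) else 0)} := by
    ext x
    constructor
    · rintro ⟨c, hc0, hsupp, hx⟩
      refine ⟨fun p => c p.1 p.2, fun p => hc0 p.1 p.2, ?_⟩
      apply WithLp.ofLp_injective 2
      rw [hx, WithLp.ofLp_sum]
      simp only [WithLp.ofLp_smul, WithLp.ofLp_toLp]
      rw [Fintype.sum_prod_type]
      apply Finset.sum_congr rfl; intro i _
      apply Finset.sum_congr rfl; intro j _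
      by_cases h : G.Adj i j
      · rw [if_pos h]
      · have hc : c i j = 0 := by
          by_contra hne; exact h (hsupp i j hne)
        rw [if_neg h]
        dsimp only
        rw [hc, zero_smul, zero_smul]
    · rintro ⟨c, hc0, rfl⟩
      refine ⟨fun i j => if G.Adj i j then c (i, j) else 0,
        fun i j => by dsimp only; split; exacts [hc0 _, le_rfl],
        fun i j hne => by
          dsimp only at hne
          by_contra h; rw [if_neg h] at hne; exact hne rfl, ?_⟩
      rw [WithLp.ofLp_sum]
      simp only [WithLp.ofLp_smul, WithLp.ofLp_toLp]
      rw [Fintype.sum_prod_type]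
      apply Finset.sum_congr rfl; intro i _
      apply Finset.sum_congr rfl; intro j _
      by_cases h : G.Adj i j
      · dsimp only; rw [if_pos h, if_pos h]
      · dsimp only; rw [if_neg h, if_neg h, zero_smul, smul_zero]
  have hclosed : IsClosed (K : Set (EuclideanSpace ℝ (Fin n))) := by
    rw [hKset]
    exact isClosed_cone_fg _
  -- Farkas
  have hdd : ∀ z : EuclideanSpace ℝ (Fin n),
      (∀ x, (∀ y ∈ K, 0 ≤ ⟪y, x⟫) → 0 ≤ ⟪x, z⟫) → z ∈ K := by
    intro z hz
    let C : ProperCone ℝ (EuclideanSpace ℝ (Fin n)) := ⟨K.toPointedCone hK0, hclosed⟩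
    by_contra hzK
    obtain ⟨y, hy, hyz⟩ := C.hyperplane_separation' (x₀ := z) hzK
    have := hz y (fun x hx => hy x hx)
    rw [real_inner_comm] at this
    linarith
  let a' : EuclideanSpace ℝ (Fin n) := WithLp.toLp 2 a
  have haK : a' ∈ K := by
    apply hdd
    intro x hx
    have hedge : ∀ i j, G.Adj i j → 0 ≤ x i + x j := by
      intro i j hadj
      have hij : i ≠ j := hadj.ne
      have hmem : (WithLp.toLp 2 (Pi.single i (1:ℝ) + Pi.single j 1) : EuclideanSpace ℝ (Fin n)) ∈ K := by
        refine ⟨fun p q => if p = i ∧ q = j then 1 else 0,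
          fun p q => by dsimp only; split; exacts [zero_le_one, le_rfl], ?_, ?_⟩
        · intro p q hne
          dsimp only at hne
          by_contra h
          have hnpq : ¬ (p = i ∧ q = j) := by
            rintro ⟨rfl, rfl⟩; exact h hadj
          rw [if_neg hnpq] at hne; exact hne rfl
        · have key : ∀ p : Fin n, (∑ q : Fin n, (if p = i ∧ q = j then (1:ℝ) else 0) •
              (Pi.single p (1:ℝ) + Pi.single q (1:ℝ)) : Fin n → ℝ) =
              (if p = i then (Pi.single p (1:ℝ) + Pi.single j (1:ℝ) : Fin n → ℝ)
                else (0 : Fin n → ℝ)) := by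
            intro p
            by_cases hp : p = i
            · subst hp
              rw [if_pos rfl]
              rw [Finset.sum_eq_single j]
              · simp
              · intro q _ hq
                have hn : ¬ (p = p ∧ q = j) := fun hh => hq hh.2
                rw [if_neg hn, zero_smul]
              · intro h; exact absurd (Finset.mem_univ j) h
            · rw [if_neg hp]
              apply Finset.sum_eq_zero
              intro q _
              have hn : ¬ (p = i ∧ q = j) := fun hh => hp hh.1
              rw [if_neg hn, zero_smul]
          rw [Finset.sum_congr rfl (fun p _ => key p),
            Finset.sum_eq_single i (fun b _ hb => if_neg hb)
              (fun h => absurd (Finset.mem_univ i) h), if_pos rfl]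
      have hpos := hx _ hmem
      rw [euclid_inner_eq] at hpos
      have hcompute : (∑ k, (WithLp.toLp 2 (Pi.single i (1:ℝ) + Pi.single j 1) : EuclideanSpace ℝ (Fin n)) k
          * x k) = x i + x j := by
        have key : ∀ k : Fin n, (WithLp.toLp 2 (Pi.single i (1:ℝ) + Pi.single j 1) : EuclideanSpace ℝ (Fin n)) k
            * x k = (if k = i then x k else 0) + (if k = j then x k else 0) := by
          intro k
          have happ : (WithLp.toLp 2 (Pi.single i (1:ℝ) + Pi.single j 1) : EuclideanSpace ℝ (Fin n)) k
              = (if k = i then (1:ℝ) else 0) + (if k = j then (1:ℝ) else 0) := by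
            have happ0 : (WithLp.toLp 2 (Pi.single i (1:ℝ) + Pi.single j 1) : EuclideanSpace ℝ (Fin n)) k
                = (Pi.single i (1:ℝ) : Fin n → ℝ) k + (Pi.single j (1:ℝ) : Fin n → ℝ) k := rfl
            rw [happ0, Pi.single_apply, Pi.single_apply]
          rw [happ]
          by_cases h1 : k = i
          · subst h1
            rw [if_pos rfl, if_pos rfl, if_neg hij, if_neg hij]
            ring
          · rw [if_neg h1, if_neg h1]
            by_cases h2 : k = j
            · subst h2; rw [if_pos rfl, if_pos rfl]; ring
            · rw [if_neg h2, if_neg h2]; ring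
        rw [Finset.sum_congr rfl (fun k _ => key k), Finset.sum_add_distrib,
          Finset.sum_ite_eq' univ i (fun k => x k), Finset.sum_ite_eq' univ j (fun k => x k)]
        simp
      rw [hcompute] at hpos
      exact hpos
    -- conclusion via the combinatorial dual lemma
    have hfin := dual_edge G a ha hA x hedge
    rw [euclid_inner_eq]
    exact hfin
  exact haK

end EdgeConeHelpers

open Finset

theorem edge_cone_description {n : ℕ} (G : SimpleGraph (Fin n)) [DecidableRel G.Adj]
    (hconn : G.Connected) (a : Fin n → ℝ) :
    (∃ c : Fin n → Fin n → ℝ,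
        (∀ i j : Fin n, 0 ≤ c i j) ∧
        (∀ i j : Fin n, c i j ≠ 0 → G.Adj i j) ∧
        a = ∑ i : Fin n, ∑ j : Fin n,
              c i j • (Pi.single i (1 : ℝ) + Pi.single j (1 : ℝ))) ↔
      ((∀ i : Fin n, 0 ≤ a i) ∧
        ∀ A : Finset (Fin n), (∀ u ∈ A, ∀ w ∈ A, ¬ G.Adj u w) →
          0 ≤ (∑ i ∈ Finset.univ.filter (fun v => ∃ u ∈ A, G.Adj u v), a i)
              - ∑ i ∈ A, a i) := by
  constructor
  · intro h
    exact edge_forward G a h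
  · rintro ⟨ha, hA⟩
    exact edge_backward G a ha hA
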